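/- Let (σ₀, σ₁, …, σ_l) be a shelling of a pure simplicial d-complex K, and let K' be obtained from K by stellarly subdividing an edge e that is not contained in any of the facets σ₀, …, σ_j for some j. Then K' admits a shelling whose initial segment is (σ₀, σ₁, …, σ_j). -/

import Mathlib

open Finset

variable {V : Type*} [DecidableEq V]

/-- A (finite abstract) simplicial complex: faces are nonempty and closed under
nonempty subsets. -/
def IsComplex (K : Finset (Finset V)) : Prop :=
  ∀ f ∈ K, f.Nonempty ∧ ∀ g, g ⊆ f → g.Nonempty → g ∈ K

/-- `K` is pure of dimension `d`: every face is contained in a face with `d+1` vertices. -/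
def IsPure (K : Finset (Finset V)) (d : ℕ) : Prop :=
  ∀ f ∈ K, ∃ σ ∈ K, f ⊆ σ ∧ σ.card = d + 1

/-- A facet of a pure `d`-complex: a face with `d+1` vertices. -/
def IsFacet (K : Finset (Finset V)) (d : ℕ) (σ : Finset V) : Prop :=
  σ ∈ K ∧ σ.card = d + 1

/-- Two facets are neighboring if they share a ridge (codimension-1 face). -/
def Neighboring (K : Finset (Finset V)) (d : ℕ) (σ τ : Finset V) : Prop :=
  IsFacet K d σ ∧ IsFacet K d τ ∧ (σ ∩ τ).card = d

/-- The perspectivity `⟨σ,τ⟩` between neighboring facets: it fixes the common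
vertices and sends the vertex `σ \ τ` to the vertex `τ \ σ`. -/
noncomputable def persp (σ τ : Finset V) (v : V) : V :=
  if v ∈ τ then v else if h : (τ \ σ).Nonempty then h.choose else v

/-- The projectivity along a facet path: the composition of consecutive perspectivities. -/
noncomputable def projAlong : List (Finset V) → V → V
  | [] => id
  | [_] => id
  | σ :: τ :: rest => fun v => projAlong (τ :: rest) (persp σ τ v)

/-- A facet path: a nonempty sequence of facets in which consecutive facets share a ridge. -/
def IsFacetPath (K : Finset (Finset V)) (d : ℕ) (γ : List (Finset V)) : Prop :=
  γ ≠ [] ∧ (∀ σ ∈ γ, IsFacet K d σ) ∧ γ.Chain' (fun σ τ => (σ ∩ τ).card = d)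

/-- `K` is strongly connected: any two facets are joined by a facet path. -/
def StronglyConnected (K : Finset (Finset V)) (d : ℕ) : Prop :=
  ∀ σ τ, IsFacet K d σ → IsFacet K d τ →
    ∃ γ, IsFacetPath K d γ ∧ γ.head? = some σ ∧ γ.getLast? = some τ

/-- `K` is locally strongly connected: the star of every face is strongly connected. -/
def LocallyStronglyConnected (K : Finset (Finset V)) (d : ℕ) : Prop :=
  ∀ f ∈ K, ∀ σ τ, IsFacet K d σ → IsFacet K d τ → f ⊆ σ → f ⊆ τ →
    ∃ γ, IsFacetPath K d γ ∧ γ.head? = some σ ∧ γ.getLast? = some τ ∧ ∀ ρ ∈ γ, f ⊆ ρ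

/-- The vertex set of a complex. -/
def vertexSet (K : Finset (Finset V)) : Finset V := K.biUnion id

/-- A proper coloring of the 1-skeleton of `K`: the endpoints of every edge
(2-element face) receive distinct colors. -/
def ProperColoring {α : Type*} (K : Finset (Finset V)) (c : V → α) : Prop :=
  ∀ v w, v ≠ w → ({v, w} : Finset V) ∈ K → c v ≠ c w

/-- A codimension-2 face `f` is odd if its link graph is not 2-colorable (not bipartite). -/
def OddFace (K : Finset (Finset V)) (f : Finset V) : Prop :=
  ¬ ∃ b : V → Bool, ∀ w w', w ∉ f → w' ∉ f → w ≠ w' →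
      f ∪ {w, w'} ∈ K → b w ≠ b w'

/-- Stellar subdivision of the edge `e` of `K` by the new vertex `u`:
faces not containing `e` are kept; every face containing `e` is replaced by the
cones of `u` over the faces of its boundary not containing `e`. -/
def stellarSub (K : Finset (Finset V)) (e : Finset V) (u : V) : Finset (Finset V) :=
  K.filter (fun f => ¬ e ⊆ f) ∪
    (K.filter fun f => e ⊆ f).biUnion fun f =>
      e.biUnion fun x => ((f.erase x).powerset).image fun g => insert u g

/-- `EdgeSubdivSeq K K'` : `K'` is obtained from `K` by a finite sequence of stellar
subdivisions of edges (each subdividing vertex being a fresh vertex). -/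
inductive EdgeSubdivSeq : Finset (Finset V) → Finset (Finset V) → Prop
  | refl (K : Finset (Finset V)) : EdgeSubdivSeq K K
  | step (K L : Finset (Finset V)) (e : Finset V) (u : V) :
      EdgeSubdivSeq K L → e ∈ L → e.card = 2 → u ∉ vertexSet L →
      EdgeSubdivSeq K (stellarSub L e u)

/-- A boundary ridge: a `(d-1)`-dimensional face contained in exactly one facet. -/
def IsBoundaryRidge (K : Finset (Finset V)) (d : ℕ) (g : Finset V) : Prop :=
  g ∈ K ∧ g.card = d ∧ (K.filter fun τ => τ.card = d + 1 ∧ g ⊆ τ).card = 1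

/-- The shelling condition for attaching the facet `σ` to the union of the facets in
`prev`: the intersection is a nonempty pure `(d-1)`-dimensional complex. -/
def ShellStep (d : ℕ) (σ : Finset V) (prev : List (Finset V)) : Prop :=
  (∃ τ ∈ prev, (σ ∩ τ).Nonempty) ∧
  ∀ τ ∈ prev, ∃ ρ ∈ prev, σ ∩ τ ⊆ σ ∩ ρ ∧ (σ ∩ ρ).card = d

/-- A shelling of a pure `d`-complex `K`: an ordering of all facets such that each facet
meets the union of its predecessors in a nonempty pure `(d-1)`-complex. -/
def IsShelling (K : Finset (Finset V)) (d : ℕ) (L : List (Finset V)) : Prop :=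
  L.Nodup ∧ (∀ σ, IsFacet K d σ ↔ σ ∈ L) ∧
  ∀ i (h : i < L.length), 0 < i → ShellStep d (L.get ⟨i, h⟩) (L.take i)

namespace StellarAux


lemma insert_inter_insert (u : V) (s t : Finset V) :
    insert u s ∩ insert u t = insert u (s ∩ t) := by
  ext x; simp only [Finset.mem_inter, Finset.mem_insert]; tauto

lemma erase_erase_comm (s : Finset V) (z z' : V) :
    (s.erase z).erase z' = (s.erase z').erase z := by
  ext x; simp only [Finset.mem_erase]; tauto

lemma erase_inter_erase (s : Finset V) (z z' : V) :
    s.erase z ∩ s.erase z' = (s.erase z).erase z' := by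
  ext x; simp only [Finset.mem_inter, Finset.mem_erase]; tauto

lemma ridge_eq_erase {d : ℕ} {σ r : Finset V} (hσ : σ.card = d + 1)
    (hr : r ⊆ σ) (hrc : r.card = d) : ∃ c ∈ σ, c ∉ r ∧ r = σ.erase c := by
  have h1 : (σ \ r).card = 1 := by rw [Finset.card_sdiff_of_subset hr, hσ, hrc]; omega
  obtain ⟨c, hc⟩ := Finset.card_eq_one.mp h1
  have hmem : c ∈ σ \ r := hc ▸ Finset.mem_singleton_self c
  have hcσ : c ∈ σ := (Finset.mem_sdiff.mp hmem).1
  have hcr : c ∉ r := (Finset.mem_sdiff.mp hmem).2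
  refine ⟨c, hcσ, hcr, ?_⟩
  ext x
  simp only [Finset.mem_erase]
  constructor
  · intro hx; exact ⟨fun h => hcr (h ▸ hx), hr hx⟩
  · rintro ⟨hxc, hxσ⟩
    by_contra hxr
    have : x ∈ σ \ r := Finset.mem_sdiff.mpr ⟨hxσ, hxr⟩
    rw [hc] at this; exact hxc (Finset.mem_singleton.mp this)

lemma full_step {d : ℕ} (hd : 1 ≤ d) (e σ : Finset V) (u : V)
    (huσ : u ∉ σ) (heσ : ¬ e ⊆ σ)
    (prevK P : List (Finset V))
    (horig : ShellStep d σ prevK)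
    (hell : ∀ τ ∈ prevK, ¬ e ⊆ τ → τ ∈ P)
    (hell2 : ∀ τ ∈ prevK, e ⊆ τ → ∀ v ∈ e, insert u (τ.erase v) ∈ P)
    (hPmem : ∀ τ' ∈ P, ∃ τ ∈ prevK,
      (τ' = τ ∧ ¬ e ⊆ τ) ∨ (e ⊆ τ ∧ ∃ v ∈ e, τ' = insert u (τ.erase v))) :
    ShellStep d σ P := by
  obtain ⟨v₀, hv₀e, hv₀σ⟩ := Finset.not_subset.mp heσ
  have key : ∀ τ ∈ prevK, ∃ ρ' ∈ P, σ ∩ τ ⊆ σ ∩ ρ' ∧ (σ ∩ ρ').card = d := by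
    intro τ hτ
    obtain ⟨ρ, hρ, hsub, hcard⟩ := horig.2 τ hτ
    by_cases hEρ : e ⊆ ρ
    · refine ⟨insert u (ρ.erase v₀), hell2 ρ hρ hEρ v₀ hv₀e, ?_, ?_⟩
      · intro x hx
        have hxσ := (Finset.mem_inter.mp hx).1
        have hxρ : x ∈ ρ := (Finset.mem_inter.mp (hsub hx)).2
        exact Finset.mem_inter.mpr ⟨hxσ, Finset.mem_insert_of_mem
          (Finset.mem_erase.mpr ⟨fun h => hv₀σ (h ▸ hxσ), hxρ⟩)⟩
      · have heq : σ ∩ insert u (ρ.erase v₀) = σ ∩ ρ := by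
          ext x; simp only [Finset.mem_inter, Finset.mem_insert, Finset.mem_erase]
          constructor
          · rintro ⟨hxσ, (rfl | ⟨-, hxρ⟩)⟩
            · exact absurd hxσ huσ
            · exact ⟨hxσ, hxρ⟩
          · rintro ⟨hxσ, hxρ⟩; exact ⟨hxσ, Or.inr ⟨fun h => hv₀σ (h ▸ hxσ), hxρ⟩⟩
        rw [heq]; exact hcard
    · exact ⟨ρ, hell ρ hρ hEρ, hsub, hcard⟩
  constructor
  · obtain ⟨τ₀, hτ₀, -⟩ := horig.1
    obtain ⟨ρ', hρ'P, -, hcard⟩ := key τ₀ hτ₀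
    exact ⟨ρ', hρ'P, Finset.card_pos.mp (by omega)⟩
  · intro τ' hτ'
    obtain ⟨τ, hτ, hform⟩ := hPmem τ' hτ'
    obtain ⟨ρ', hρ'P, hsub, hcard⟩ := key τ hτ
    refine ⟨ρ', hρ'P, ?_, hcard⟩
    have hτ'sub : σ ∩ τ' ⊆ σ ∩ τ := by
      rcases hform with ⟨rfl, -⟩ | ⟨-, v, hv, rfl⟩
      · exact Finset.Subset.refl _
      · intro x hx
        obtain ⟨hxσ, hxi⟩ := Finset.mem_inter.mp hx
        rcases Finset.mem_insert.mp hxi with rfl | hxe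
        · exact absurd hxσ huσ
        · exact Finset.mem_inter.mpr ⟨hxσ, Finset.mem_of_mem_erase hxe⟩
    exact hτ'sub.trans hsub

lemma half_step {d : ℕ} (hd : 1 ≤ d) (e σ : Finset V) (u z z' : V)
    (huσ : u ∉ σ) (hzz' : z ≠ z') (heq : e = {z, z'}) (heσ : e ⊆ σ)
    (hcardσ : σ.card = d + 1)
    (prevK P : List (Finset V))
    (horig : ShellStep d σ prevK)
    (huprev : ∀ τ ∈ prevK, u ∉ τ)
    (hell : ∀ τ ∈ prevK, ¬ e ⊆ τ → τ ∈ P)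
    (hell2 : ∀ τ ∈ prevK, e ⊆ τ → ∀ v ∈ e, insert u (τ.erase v) ∈ P)
    (hPmem : ∀ τ' ∈ P, (∃ τ ∈ prevK,
        (τ' = τ ∧ ¬ e ⊆ τ) ∨ (e ⊆ τ ∧ ∃ v ∈ e, τ' = insert u (τ.erase v)))
      ∨ τ' = insert u (σ.erase z'))
    (hsafe : (∀ ρ ∈ prevK, σ ∩ ρ ≠ σ.erase z') ∨
      ∃ q ∈ P, (σ.erase z).erase z' ⊆ insert u (σ.erase z) ∩ q ∧
        (insert u (σ.erase z) ∩ q).card = d) :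
    ShellStep d (insert u (σ.erase z)) P := by
  set A := insert u (σ.erase z) with hA
  have hze : z ∈ e := by rw [heq]; exact Finset.mem_insert_self _ _
  have hz'e : z' ∈ e := by rw [heq]; simp
  have hzσ : z ∈ σ := heσ hze
  have hz'σ : z' ∈ σ := heσ hz'e
  have key : ∀ τ ∈ prevK, ∃ ρ' ∈ P, (A ∩ ρ').card = d ∧
      (σ ∩ τ).erase z ⊆ A ∩ ρ' ∧ (e ⊆ τ → insert u ((σ ∩ τ).erase z) ⊆ A ∩ ρ') := by
    intro τ hτ
    obtain ⟨ρ, hρ, hsub, hcard⟩ := horig.2 τ hτ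
    obtain ⟨c, hcσ, hcρ, hc⟩ := ridge_eq_erase hcardσ Finset.inter_subset_left hcard
    by_cases hEρ : e ⊆ ρ
    · have hzρ : z ∈ ρ := hEρ hze
      have hzc : z ≠ c := by rintro rfl; exact hcρ (Finset.mem_inter.mpr ⟨hzσ, hzρ⟩)
      have h1 : A ∩ insert u (ρ.erase z) = insert u ((σ ∩ ρ).erase z) := by
        rw [hA, insert_inter_insert]
        congr 1
        rw [Finset.erase_inter, Finset.inter_erase, Finset.erase_idem]
      refine ⟨insert u (ρ.erase z), hell2 ρ hρ hEρ z hze, ?_, ?_, ?_⟩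
      · rw [h1, Finset.card_insert_of_notMem
          (fun h => huσ (Finset.mem_of_mem_inter_left (Finset.mem_of_mem_erase h)))]
        rw [Finset.card_erase_of_mem (Finset.mem_inter.mpr ⟨hzσ, hzρ⟩), hcard]
        omega
      · rw [h1]
        exact (Finset.erase_subset_erase _ hsub).trans (Finset.subset_insert _ _)
      · intro _
        rw [h1]
        exact Finset.insert_subset_insert _ (Finset.erase_subset_erase _ hsub)
    · have hEτ : ¬ e ⊆ τ := by
        intro h
        exact hEρ (fun x hx =>
          (Finset.mem_inter.mp (hsub (Finset.mem_inter.mpr ⟨heσ hx, h hx⟩))).2)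
      have hcz : c = z ∨ c = z' := by
        by_contra hcon
        push_neg at hcon
        apply hEρ
        intro x hx
        have hxσ : x ∈ σ := heσ hx
        have hxc : x ≠ c := by
          rintro rfl
          rw [heq] at hx
          rcases Finset.mem_insert.mp hx with rfl | hx2
          · exact hcon.1 rfl
          · exact hcon.2 (Finset.mem_singleton.mp hx2)
        have : x ∈ σ ∩ ρ := by rw [hc]; exact Finset.mem_erase.mpr ⟨hxc, hxσ⟩
        exact (Finset.mem_inter.mp this).2
      have huρ : u ∉ ρ := huprev ρ hρ
      rcases hcz with hcz | hcz
      · -- c = z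
        have hc' : σ ∩ ρ = σ.erase z := hcz ▸ hc
        have h1 : A ∩ ρ = σ.erase z := by
          rw [hA, Finset.insert_inter_of_notMem huρ, Finset.erase_inter, hc',
            Finset.erase_idem]
        refine ⟨ρ, hell ρ hρ hEρ, ?_, ?_, fun h => absurd h hEτ⟩
        · rw [h1, Finset.card_erase_of_mem hzσ, hcardσ]
          omega
        · rw [h1]
          exact (Finset.erase_subset_erase _ hsub).trans
            (by rw [hc']; exact Finset.erase_subset _ _)
      · -- c = z'
        have hc' : σ ∩ ρ = σ.erase z' := hcz ▸ hc
        rcases hsafe with hleft | ⟨q, hqP, hq1, hq2⟩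
        · exact absurd hc' (hleft ρ hρ)
        · refine ⟨q, hqP, hq2, ?_, fun h => absurd h hEτ⟩
          refine Finset.Subset.trans ?_ hq1
          calc (σ ∩ τ).erase z ⊆ (σ ∩ ρ).erase z := Finset.erase_subset_erase _ hsub
            _ = (σ.erase z').erase z := by rw [hc']
            _ = (σ.erase z).erase z' := by rw [erase_erase_comm]
  constructor
  · obtain ⟨τ₀, hτ₀, -⟩ := horig.1
    obtain ⟨ρ', hρ'P, hcard, -, -⟩ := key τ₀ hτ₀
    exact ⟨ρ', hρ'P, Finset.card_pos.mp (by omega)⟩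
  · intro τ' hτ'
    rcases hPmem τ' hτ' with ⟨τ, hτ, hform⟩ | rfl
    · obtain ⟨ρ', hρ'P, hcard, h1, h2⟩ := key τ hτ
      refine ⟨ρ', hρ'P, ?_, hcard⟩
      rcases hform with ⟨hE, hEτ⟩ | ⟨hEτ, v, hv, hE⟩
      · rw [hE]
        have huτ : u ∉ τ := huprev τ hτ
        have hAτ : A ∩ τ = (σ ∩ τ).erase z := by
          rw [hA, Finset.insert_inter_of_notMem huτ, Finset.erase_inter]
        rw [hAτ]; exact h1
      · rw [hE]
        refine Finset.Subset.trans ?_ (h2 hEτ)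
        intro x hx
        obtain ⟨hxA, hxi⟩ := Finset.mem_inter.mp hx
        rcases Finset.mem_insert.mp hxi with rfl | hxe
        · exact Finset.mem_insert_self _ _
        · rcases Finset.mem_insert.mp hxA with rfl | hxA'
          · exact absurd (Finset.mem_of_mem_erase hxe) (huprev τ hτ)
          · obtain ⟨hxz, hxσ⟩ := Finset.mem_erase.mp hxA'
            exact Finset.mem_insert_of_mem (Finset.mem_erase.mpr
              ⟨hxz, Finset.mem_inter.mpr ⟨hxσ, Finset.mem_of_mem_erase hxe⟩⟩)
    · refine ⟨insert u (σ.erase z'), hτ', Finset.Subset.refl _, ?_⟩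
      have h1 : A ∩ insert u (σ.erase z') = insert u ((σ.erase z).erase z') := by
        rw [hA, insert_inter_insert, erase_inter_erase]
      rw [h1, Finset.card_insert_of_notMem
        (fun h => huσ (Finset.mem_of_mem_erase (Finset.mem_of_mem_erase h)))]
      rw [Finset.card_erase_of_mem (Finset.mem_erase.mpr ⟨Ne.symm hzz', hz'σ⟩),
        Finset.card_erase_of_mem hzσ, hcardσ]
      omega



lemma flatMap_decomp {α β : Type*} (f : α → List β) :
    ∀ (L : List α) (i' : ℕ) (h : i' < (L.flatMap f).length),
    ∃ (i : ℕ) (hi : i < L.length) (k : ℕ) (hk : k < (f (L[i]'hi)).length),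
      ((L.flatMap f)[i']'h) = (f (L[i]'hi))[k] ∧
      (L.flatMap f).take i' = (L.take i).flatMap f ++ (f (L[i]'hi)).take k ∧
      i' = ((L.take i).flatMap f).length + k := by
  intro L
  induction L with
  | nil => intro i' h; simp at h
  | cons σ rest ih =>
    intro i' h
    by_cases hlt : i' < (f σ).length
    · refine ⟨0, by simp, i', hlt, ?_, ?_, by simp⟩
      · simp only [List.flatMap_cons]
        exact List.getElem_append_left hlt
      · simp only [List.flatMap_cons, List.take_append,
          Nat.sub_eq_zero_of_le (le_of_lt hlt), List.take_zero, List.append_nil,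
          List.take_nil, List.flatMap_nil, List.nil_append]
        rfl
    · push_neg at hlt
      have h' : i' - (f σ).length < (rest.flatMap f).length := by
        rw [List.flatMap_cons, List.length_append] at h; omega
      obtain ⟨i, hi, k, hk, hg, ht, hl⟩ := ih (i' - (f σ).length) h'
      have hi1 : i + 1 < (σ :: rest).length := by simpa using Nat.succ_lt_succ hi
      have hgety : ((σ :: rest)[i+1]'hi1) = rest[i]'hi := by simp
      refine ⟨i + 1, hi1, k, by simp only [hgety]; exact hk, ?_, ?_, ?_⟩
      · simp only [List.flatMap_cons, hgety]
        rw [List.getElem_append_right hlt]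
        exact hg
      · simp only [List.flatMap_cons, hgety, List.take_succ_cons]
        rw [List.take_append, List.take_of_length_le hlt, ht]
        simp
      · simp only [List.take_succ_cons, List.flatMap_cons, List.length_append, hgety]
        omega

lemma take_flatMap_singleton {α : Type*} (f : α → List α) :
    ∀ (L : List α) (n : ℕ), (∀ σ ∈ L.take n, f σ = [σ]) →
      (L.flatMap f).take n = L.take n := by
  intro L
  induction L with
  | nil => intro n _; simp
  | cons σ rest ih =>
    intro n hn
    cases n with
    | zero => simp
    | succ m =>
      have hσ : f σ = [σ] := hn σ (by simp)
      simp only [List.flatMap_cons, hσ, List.take_succ_cons, List.singleton_append]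
      rw [ih m (fun τ hτ => hn τ (by simp [List.take_succ_cons, hτ]))]

open Classical in
noncomputable def halvesF (e : Finset V) (u a b : V) (L : List (Finset V))
    (σ : Finset V) : List (Finset V) :=
  if e ⊆ σ then
    if ∃ ρ ∈ L.take (List.idxOf σ L), σ ∩ ρ = σ.erase a then
      [insert u (σ.erase a), insert u (σ.erase b)]
    else [insert u (σ.erase b), insert u (σ.erase a)]
  else [σ]

lemma halvesF_neg {e : Finset V} {u a b : V} {L : List (Finset V)} {σ : Finset V}
    (h : ¬ e ⊆ σ) : halvesF e u a b L σ = [σ] := by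
  rw [halvesF, if_neg h]

lemma halvesF_pos {e : Finset V} {u a b : V} {L : List (Finset V)} {σ : Finset V}
    (hab : a ≠ b) (heab : e = {a, b}) (h : e ⊆ σ) :
    ∃ z z', e = {z, z'} ∧ z ≠ z' ∧
      halvesF e u a b L σ = [insert u (σ.erase z), insert u (σ.erase z')] ∧
      ((∀ ρ ∈ L.take (List.idxOf σ L), σ ∩ ρ ≠ σ.erase z') ∨
        (∃ ρ ∈ L.take (List.idxOf σ L), σ ∩ ρ = σ.erase z)) := by
  classical
  rw [halvesF, if_pos h]
  by_cases hcov : ∃ ρ ∈ L.take (List.idxOf σ L), σ ∩ ρ = σ.erase a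
  · exact ⟨a, b, heab, hab, by rw [if_pos hcov], Or.inr hcov⟩
  · refine ⟨b, a, by rw [heab, Finset.pair_comm], hab.symm, by rw [if_neg hcov], ?_⟩
    left
    intro ρ hρ hcon
    exact hcov ⟨ρ, hρ, hcon⟩

lemma halvesF_mem {e : Finset V} {u a b : V} {L : List (Finset V)} {σ : Finset V}
    (heab : e = {a, b}) (h : e ⊆ σ) {v : V} (hv : v ∈ e) :
    insert u (σ.erase v) ∈ halvesF e u a b L σ := by
  classical
  rw [halvesF, if_pos h]
  have : v = a ∨ v = b := by
    rw [heab] at hv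
    simpa using hv
  split <;> rcases this with rfl | rfl <;> simp

lemma halvesF_shape {e : Finset V} {u a b : V} {L : List (Finset V)} {σ τ' : Finset V}
    (heab : e = {a, b}) (h : e ⊆ σ) (hτ' : τ' ∈ halvesF e u a b L σ) :
    ∃ v ∈ e, τ' = insert u (σ.erase v) := by
  classical
  rw [halvesF, if_pos h] at hτ'
  have ha : a ∈ e := by rw [heab]; simp
  have hb : b ∈ e := by rw [heab]; simp
  split at hτ' <;> simp only [List.mem_cons, List.mem_singleton, List.not_mem_nil,
    or_false] at hτ' <;> rcases hτ' with rfl | rfl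
  · exact ⟨a, ha, rfl⟩
  · exact ⟨b, hb, rfl⟩
  · exact ⟨b, hb, rfl⟩
  · exact ⟨a, ha, rfl⟩


lemma insert_erase_ne {σ τ : Finset V} {u z z' : V} (hzz' : z ≠ z')
    (hz'σ : z' ∈ σ) (hz'τ' : z' ∉ τ.erase z') (hz'u : z' ≠ u) :
    insert u (σ.erase z) ≠ insert u (τ.erase z') := by
  intro h
  have h1 : z' ∈ insert u (σ.erase z) :=
    Finset.mem_insert_of_mem (Finset.mem_erase.mpr ⟨Ne.symm hzz', hz'σ⟩)
  rw [h] at h1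
  rcases Finset.mem_insert.mp h1 with h2 | h2
  · exact hz'u h2
  · exact hz'τ' h2

end StellarAux

/-- If `K` is shellable and the edge `e` is not contained in any of the
first `j+1` facets of a shelling, then the stellar subdivision of `K` at `e` admits a
shelling with the same initial segment. -/
theorem shelling_preserved_under_stellar
    [Infinite V]
    (K : Finset (Finset V)) (d : ℕ) (hK : IsComplex K) (hpure : IsPure K d)
    (L : List (Finset V)) (hshell : IsShelling K d L)
    (e : Finset V) (he : e ∈ K) (hecard : e.card = 2)
    (u : V) (hu : u ∉ vertexSet K)
    (j : ℕ) (hj : ∀ σ ∈ L.take (j + 1), ¬ e ⊆ σ) :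
    ∃ L' : List (Finset V), IsShelling (stellarSub K e u) d L' ∧
      L'.take (j + 1) = L.take (j + 1) := by
  classical
  obtain ⟨hnodup, hfacetiff, hsteps⟩ := hshell
  obtain ⟨a, b, hab, heab⟩ := Finset.card_eq_two.mp hecard
  obtain ⟨σe, hσeK, heσe, hσec⟩ := hpure e he
  have hd : 1 ≤ d := by
    have := Finset.card_le_card heσe
    rw [hecard, hσec] at this
    omega
  have hufaces : ∀ g ∈ K, u ∉ g := by
    intro g hg hug
    exact hu (Finset.mem_biUnion.mpr ⟨g, hg, hug⟩)
  set f := StellarAux.halvesF e u a b L with hf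
  have hK'mem : ∀ s, s ∈ stellarSub K e u ↔ ((s ∈ K ∧ ¬ e ⊆ s) ∨
      ∃ g ∈ K, e ⊆ g ∧ ∃ x ∈ e, ∃ t, t ⊆ g.erase x ∧ s = insert u t) := by
    intro s
    unfold stellarSub
    rw [Finset.mem_union, Finset.mem_filter, Finset.mem_biUnion]
    constructor
    · rintro (⟨h1, h2⟩ | ⟨g, hg, hmem⟩)
      · exact Or.inl ⟨h1, h2⟩
      · rw [Finset.mem_filter] at hg
        rw [Finset.mem_biUnion] at hmem
        obtain ⟨x, hx, hmem⟩ := hmem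
        rw [Finset.mem_image] at hmem
        obtain ⟨t, ht, rfl⟩ := hmem
        rw [Finset.mem_powerset] at ht
        exact Or.inr ⟨g, hg.1, hg.2, x, hx, t, ht, rfl⟩
    · rintro (⟨h1, h2⟩ | ⟨g, hg, heg, x, hx, t, ht, rfl⟩)
      · exact Or.inl ⟨h1, h2⟩
      · refine Or.inr ⟨g, Finset.mem_filter.mpr ⟨hg, heg⟩, ?_⟩
        rw [Finset.mem_biUnion]
        exact ⟨x, hx, Finset.mem_image.mpr ⟨t, Finset.mem_powerset.mpr ht, rfl⟩⟩
  refine ⟨L.flatMap f, ⟨?_, ?_, ?_⟩, ?_⟩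
  · -- Nodup
    refine List.nodup_flatMap.mpr ⟨?_, ?_⟩
    · intro σ hσL
      obtain ⟨hσK, hσc⟩ := (hfacetiff σ).mpr hσL
      by_cases heσ : e ⊆ σ
      · obtain ⟨z, z', hezz, hzz', hfσ, -⟩ :=
          StellarAux.halvesF_pos (u := u) (L := L) hab heab heσ
        rw [hf, hfσ]
        have hz'σ : z' ∈ σ := heσ (by rw [hezz]; simp)
        have hz'u : z' ≠ u := fun h => hufaces σ hσK (h ▸ hz'σ)
        simp only [List.nodup_cons, List.mem_singleton, List.not_mem_nil,
          not_false_iff, List.nodup_nil, and_true]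
        exact StellarAux.insert_erase_ne hzz' hz'σ (Finset.notMem_erase _ _) hz'u
      · rw [hf, StellarAux.halvesF_neg heσ]
        simp
    · refine List.Pairwise.imp_of_mem ?_ hnodup
      intro σ τ hσL hτL hne
      obtain ⟨hσK, hσc⟩ := (hfacetiff σ).mpr hσL
      obtain ⟨hτK, hτc⟩ := (hfacetiff τ).mpr hτL
      have huσ : u ∉ σ := hufaces σ hσK
      have huτ : u ∉ τ := hufaces τ hτK
      intro s hs1 hs2
      by_cases heσ : e ⊆ σ <;> by_cases heτ : e ⊆ τ
      · obtain ⟨v, hv, rfl⟩ := StellarAux.halvesF_shape heab heσ (hf ▸ hs1)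
        obtain ⟨w, hw, hvw⟩ := StellarAux.halvesF_shape heab heτ (hf ▸ hs2)
        by_cases hvweq : v = w
        · subst hvweq
          have h1 : σ.erase v = τ.erase v := by
            have := congrArg (fun s => Finset.erase s u) hvw
            simpa [Finset.erase_insert (fun h => huσ (Finset.mem_of_mem_erase h)),
              Finset.erase_insert (fun h => huτ (Finset.mem_of_mem_erase h))] using this
          apply hne
          rw [← Finset.insert_erase (heσ hv), h1, Finset.insert_erase (heτ hv)]
        · exact StellarAux.insert_erase_ne hvweq (heσ hw)
            (Finset.notMem_erase _ _) (fun h => hufaces τ hτK (by rw [← h]; exact heτ hw)) hvw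
      · rw [hf, StellarAux.halvesF_neg heτ] at hs2
        simp only [List.mem_singleton] at hs2
        obtain ⟨v, hv, rfl⟩ := StellarAux.halvesF_shape heab heσ (hf ▸ hs1)
        subst hs2
        exact huτ (Finset.mem_insert_self u _)
      · rw [hf, StellarAux.halvesF_neg heσ] at hs1
        simp only [List.mem_singleton] at hs1
        obtain ⟨v, hv, hvw⟩ := StellarAux.halvesF_shape heab heτ (hf ▸ hs2)
        subst hs1
        rw [hvw] at huσ
        exact huσ (Finset.mem_insert_self u _)
      · rw [hf, StellarAux.halvesF_neg heσ] at hs1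
        rw [hf, StellarAux.halvesF_neg heτ] at hs2
        simp only [List.mem_singleton] at hs1 hs2
        exact hne (hs1 ▸ hs2 ▸ rfl)
  · -- facet characterization
    intro s
    constructor
    · rintro ⟨hsK', hscard⟩
      rcases (hK'mem s).mp hsK' with ⟨hsK, hes⟩ | ⟨g, hgK, heg, x, hx, t, ht, rfl⟩
      · have hsL : s ∈ L := (hfacetiff s).mp ⟨hsK, hscard⟩
        exact List.mem_flatMap.mpr ⟨s, hsL,
          by rw [hf, StellarAux.halvesF_neg hes]; simp⟩
      · have htg : t ⊆ g := ht.trans (Finset.erase_subset _ _)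
        have hut : u ∉ t := fun h => hufaces g hgK (htg h)
        have htc : t.card = d := by
          have h2 := Finset.card_insert_of_notMem hut
          rw [hscard] at h2
          omega
        have hxg : x ∈ g := heg hx
        obtain ⟨G, hGK, hgG, hGc⟩ := hpure g hgK
        have hgle : g.card ≤ d + 1 := hGc ▸ Finset.card_le_card hgG
        have hgec : (g.erase x).card = g.card - 1 := Finset.card_erase_of_mem hxg
        have hteq : t = g.erase x := Finset.eq_of_subset_of_card_le ht (by omega)
        have hgcard : g.card = d + 1 := by
          have hgpos : 1 ≤ g.card := Finset.card_pos.mpr ⟨x, hxg⟩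
          rw [hteq, hgec] at htc
          omega
        have hgL : g ∈ L := (hfacetiff g).mp ⟨hgK, hgcard⟩
        refine List.mem_flatMap.mpr ⟨g, hgL, ?_⟩
        rw [hteq, hf]
        exact StellarAux.halvesF_mem heab heg hx
    · intro hs
      obtain ⟨σ, hσL, hsf⟩ := List.mem_flatMap.mp hs
      obtain ⟨hσK, hσc⟩ := (hfacetiff σ).mpr hσL
      by_cases heσ : e ⊆ σ
      · obtain ⟨v, hv, rfl⟩ := StellarAux.halvesF_shape heab heσ (hf ▸ hsf)
        have hvσ : v ∈ σ := heσ hv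
        have hu' : u ∉ σ.erase v := fun h => hufaces σ hσK (Finset.mem_of_mem_erase h)
        refine ⟨(hK'mem _).mpr (Or.inr
          ⟨σ, hσK, heσ, v, hv, σ.erase v, Finset.Subset.refl _, rfl⟩), ?_⟩
        rw [Finset.card_insert_of_notMem hu', Finset.card_erase_of_mem hvσ, hσc]
        omega
      · rw [hf, StellarAux.halvesF_neg heσ] at hsf
        simp only [List.mem_singleton] at hsf
        rw [hsf]
        exact ⟨(hK'mem σ).mpr (Or.inl ⟨hσK, heσ⟩), hσc⟩
  · -- shelling steps
    intro i' hlen hpos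
    rw [List.get_eq_getElem]
    obtain ⟨i, hi, k, hk0, hget, htake, hidx⟩ := StellarAux.flatMap_decomp f L i' hlen
    rw [hget, htake]
    obtain ⟨σ, hσdef⟩ : ∃ t, L[i]'hi = t := ⟨_, rfl⟩
    have hk : k < (f σ).length := hσdef ▸ hk0
    rw [List.getElem_of_eq (congrArg f hσdef) hk0,
      show List.take k (f (L[i]'hi)) = List.take k (f σ) from by rw [hσdef]]
    have hσL : σ ∈ L := hσdef ▸ List.getElem_mem hi
    obtain ⟨hσK, hσc⟩ := (hfacetiff σ).mpr hσL
    have huσ : u ∉ σ := hufaces σ hσK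
    have hidxσ : List.idxOf σ L = i := by
      have h2 := List.get_idxOf hnodup ⟨i, hi⟩
      rw [List.get_eq_getElem] at h2
      rw [← hσdef]
      simpa using h2
    have hprevfacts : ∀ τ ∈ L.take i, τ ∈ K ∧ τ.card = d + 1 := by
      intro τ hτ
      have h2 := (hfacetiff τ).mpr (List.take_subset _ _ hτ)
      exact ⟨h2.1, h2.2⟩
    have huprev : ∀ τ ∈ L.take i, u ∉ τ := fun τ hτ => hufaces τ (hprevfacts τ hτ).1
    have hellP : ∀ τ ∈ L.take i, ¬ e ⊆ τ → τ ∈ (L.take i).flatMap f := by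
      intro τ hτ h
      exact List.mem_flatMap.mpr ⟨τ, hτ, by rw [hf, StellarAux.halvesF_neg h]; simp⟩
    have hell2P : ∀ τ ∈ L.take i, e ⊆ τ → ∀ v ∈ e,
        insert u (τ.erase v) ∈ (L.take i).flatMap f := by
      intro τ hτ h v hv
      exact List.mem_flatMap.mpr ⟨τ, hτ, hf ▸ StellarAux.halvesF_mem heab h hv⟩
    have hPmemBase : ∀ τ' ∈ (L.take i).flatMap f, ∃ τ ∈ L.take i,
        (τ' = τ ∧ ¬ e ⊆ τ) ∨ (e ⊆ τ ∧ ∃ v ∈ e, τ' = insert u (τ.erase v)) := by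
      intro τ' hτ'
      obtain ⟨τ, hτ, hτ'f⟩ := List.mem_flatMap.mp hτ'
      by_cases h : e ⊆ τ
      · obtain ⟨v, hv, rfl⟩ := StellarAux.halvesF_shape heab h (hf ▸ hτ'f)
        exact ⟨τ, hτ, Or.inr ⟨h, v, hv, rfl⟩⟩
      · rw [hf, StellarAux.halvesF_neg h] at hτ'f
        simp only [List.mem_singleton] at hτ'f
        exact ⟨τ, hτ, Or.inl ⟨hτ'f, h⟩⟩
    by_cases heσ : e ⊆ σ
    · -- σ contains e : i > j ≥ 0
      have hipos : 0 < i := by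
        rcases Nat.eq_zero_or_pos i with rfl | h
        · exfalso
          apply hj σ ?_ heσ
          have hi2 : 0 < (L.take (j + 1)).length := by
            rw [List.length_take]
            exact lt_min (Nat.succ_pos j) hi
          have hmem := List.getElem_mem hi2
          rw [List.getElem_take] at hmem
          exact hσdef ▸ hmem
        · exact h
      have horig : ShellStep d σ (L.take i) := by
        have h2 := hsteps i hi hipos
        rw [List.get_eq_getElem, hσdef] at h2
        exact h2
      obtain ⟨z, z', hezz, hzz', hfσ, hsafe0⟩ :=
        StellarAux.halvesF_pos (u := u) (L := L) hab heab heσ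
      rw [hidxσ] at hsafe0
      have hze : z ∈ e := by rw [hezz]; simp
      have hz'e : z' ∈ e := by rw [hezz]; simp
      have hzσ : z ∈ σ := heσ hze
      have hz'σ : z' ∈ σ := heσ hz'e
      have hfσ' : f σ = [insert u (σ.erase z), insert u (σ.erase z')] := by
        rw [hf, hfσ]
      rw [List.getElem_of_eq hfσ' hk,
        show List.take k (f σ) = List.take k [insert u (σ.erase z), insert u (σ.erase z')]
          from by rw [hfσ']]
      have hk' : k < 2 := by
        rw [hfσ'] at hk
        simpa using hk
      have hk2 : k = 0 ∨ k = 1 := by omega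
      rcases hk2 with rfl | rfl
      · -- first half
        simp only [List.getElem_cons_zero, List.take_zero, List.append_nil]
        refine StellarAux.half_step hd e σ u z z' huσ hzz' hezz heσ hσc
          (L.take i) _ horig huprev hellP hell2P
          (fun τ' hτ' => Or.inl (hPmemBase τ' hτ')) ?_
        rcases hsafe0 with hle | ⟨ρ₂, hρ₂, hcov⟩
        · exact Or.inl hle
        · right
          have hzρ₂ : z ∉ ρ₂ := by
            intro h
            have h2 : z ∈ σ ∩ ρ₂ := Finset.mem_inter.mpr ⟨hzσ, h⟩
            rw [hcov] at h2
            exact (Finset.mem_erase.mp h2).1 rfl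
          have heρ₂ : ¬ e ⊆ ρ₂ := fun h => hzρ₂ (h hze)
          have huρ₂ : u ∉ ρ₂ := huprev ρ₂ hρ₂
          refine ⟨ρ₂, hellP ρ₂ hρ₂ heρ₂, ?_, ?_⟩
          · have hAq : insert u (σ.erase z) ∩ ρ₂ = σ.erase z := by
              rw [Finset.insert_inter_of_notMem huρ₂, Finset.erase_inter, hcov,
                Finset.erase_idem]
            rw [hAq]
            exact Finset.erase_subset _ _
          · have hAq : insert u (σ.erase z) ∩ ρ₂ = σ.erase z := by
              rw [Finset.insert_inter_of_notMem huρ₂, Finset.erase_inter, hcov,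
                Finset.erase_idem]
            rw [hAq, Finset.card_erase_of_mem hzσ, hσc]
            omega
      · -- second half
        simp only [List.getElem_cons_succ, List.getElem_cons_zero]
        have htake1 : List.take 1 [insert u (σ.erase z), insert u (σ.erase z')]
            = [insert u (σ.erase z)] := rfl
        rw [htake1]
        refine StellarAux.half_step hd e σ u z' z huσ hzz'.symm
          (by rw [hezz, Finset.pair_comm]) heσ hσc (L.take i) _ horig huprev
          ?_ ?_ ?_ ?_
        · intro τ hτ h
          exact List.mem_append_left _ (hellP τ hτ h)
        · intro τ hτ h v hv
          exact List.mem_append_left _ (hell2P τ hτ h v hv)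
        · intro τ' hτ'
          rcases List.mem_append.mp hτ' with h | h
          · exact Or.inl (hPmemBase τ' h)
          · simp only [List.mem_singleton] at h
            exact Or.inr h
        · right
          refine ⟨insert u (σ.erase z), List.mem_append_right _ (by simp), ?_, ?_⟩
          · rw [StellarAux.insert_inter_insert, StellarAux.erase_inter_erase]
            exact Finset.subset_insert _ _
          · rw [StellarAux.insert_inter_insert, StellarAux.erase_inter_erase]
            have hzm : z ∈ σ.erase z' := Finset.mem_erase.mpr ⟨hzz', hzσ⟩
            have hum : u ∉ (σ.erase z').erase z :=
              fun h => huσ (Finset.mem_of_mem_erase (Finset.mem_of_mem_erase h))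
            rw [Finset.card_insert_of_notMem hum, Finset.card_erase_of_mem hzm,
              Finset.card_erase_of_mem hz'σ, hσc]
            omega
    · -- σ does not contain e
      have hfσ' : f σ = [σ] := by rw [hf, StellarAux.halvesF_neg heσ]
      rw [List.getElem_of_eq hfσ' hk,
        show List.take k (f σ) = List.take k [σ] from by rw [hfσ']]
      have hk' : k < 1 := by
        rw [hfσ'] at hk
        simpa using hk
      have hkz : k = 0 := by omega
      subst hkz
      simp only [List.getElem_cons_zero, List.take_zero, List.append_nil]
      have hipos : 0 < i := by
        rcases Nat.eq_zero_or_pos i with rfl | h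
        · exfalso
          simp only [List.take_zero, List.flatMap_nil, List.length_nil] at hidx
          omega
        · exact h
      have horig : ShellStep d σ (L.take i) := by
        have h2 := hsteps i hi hipos
        rw [List.get_eq_getElem, hσdef] at h2
        exact h2
      exact StellarAux.full_step hd e σ u huσ heσ (L.take i) _ horig hellP hell2P
        hPmemBase
  · -- the initial segment is preserved
    apply StellarAux.take_flatMap_singleton
    intro σ hσ
    rw [hf]
    exact StellarAux.halvesF_neg (hj σ hσ)
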